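/- Let G and G' be achievement positional games on disjoint vertex sets. If o(G)=D (the game G is a draw with optimal play whichever player starts), then o(G∪G')=o(G'). -/

import Mathlib

namespace APG

/-- The two players: Left and Right. -/
inductive Player : Type
  | L : Player
  | R : Player
deriving DecidableEq, Repr

/-- The opponent of a player. -/
def Player.other : Player → Player
  | .L => .R
  | .R => .L

/-- An achievement positional game: a finite vertex set together with the set of
blue edges (Left's winning sets) and the set of red edges (Right's winning sets). -/
structure Game : Type where
  V : Finset ℕ
  EL : Finset (Finset ℕ)
  ER : Finset (Finset ℕ)

/-- The edges are nonempty subsets of the vertex set. -/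
def WellFormed (G : Game) : Prop :=
  (∀ e ∈ G.EL, e ⊆ G.V ∧ e.Nonempty) ∧ (∀ e ∈ G.ER, e ⊆ G.V ∧ e.Nonempty)

/-- The winning sets of a given player. -/
def Game.edges (G : Game) : Player → Finset (Finset ℕ)
  | .L => G.EL
  | .R => G.ER

/-- The player who makes the `i`-th move (0-indexed) when `s` moves first. -/
def mover (s : Player) (i : ℕ) : Player := if i % 2 = 0 then s else s.other

/-- The set of vertices picked by player `p` along the history `h`
(the chronological list of the moves played so far), when `s` moved first. -/
def picked (s p : Player) (h : List ℕ) : Finset ℕ :=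
  ((Finset.range h.length).filter fun i => mover s i = p).image fun i => h.getD i 0

/-- The set `S` of picked vertices fills some edge of `E`. -/
def fills (E : Finset (Finset ℕ)) (S : Finset ℕ) : Prop := ∃ e ∈ E, e ⊆ S

/-- The game is over: some player has picked all the vertices of one of their edges. -/
def ended (G : Game) (s : Player) (h : List ℕ) : Prop :=
  fills G.EL (picked s .L h) ∨ fills G.ER (picked s .R h)

/-- `h` is a legal history: no vertex is picked twice, every picked vertex belongs to
the board, and no move is made after the game has ended. -/
def ValidHist (G : Game) (s : Player) (h : List ℕ) : Prop :=
  h.Nodup ∧ (∀ x ∈ h, x ∈ G.V) ∧ ∀ k, k < h.length → ¬ ended G s (h.take k)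

/-- A strategy: a map assigning to each position (history) a vertex to pick. -/
abbrev Strategy := List ℕ → ℕ

/-- Along `h`, every move of player `p` agrees with the strategy `σ`. -/
def Follows (s p : Player) (σ : Strategy) (h : List ℕ) : Prop :=
  ∀ k, k < h.length → mover s k = p → h.getD k 0 = σ (h.take k)

/-- A finished play: either the game has ended or all vertices have been picked. -/
def Complete (G : Game) (s : Player) (h : List ℕ) : Prop :=
  ended G s h ∨ h.length = G.V.card

/-- The strategy `σ` of player `p` always suggests a legal move (an unpicked vertex)
whenever the game is not over and it is `p`'s turn. -/
def Legal (G : Game) (s p : Player) (σ : Strategy) : Prop :=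
  ∀ h, ValidHist G s h → Follows s p σ h → ¬ ended G s h → h.length < G.V.card →
    mover s h.length = p → σ h ∈ G.V ∧ σ h ∉ h

/-- Player `p` has a winning strategy on `G` when `s` moves first: following it,
every finished play ends with `p` having filled one of their edges (and, the game
having ended right there, the opponent has not filled an edge first). -/
def WinsAs (G : Game) (s p : Player) : Prop :=
  ∃ σ : Strategy, Legal G s p σ ∧
    ∀ h, ValidHist G s h → Follows s p σ h → Complete G s h →
      fills (G.edges p) (picked s p h)

/-- Player `p` has a non-losing strategy on `G` when `s` moves first: following it,
the opponent never fills one of their edges. -/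
def NonLosingAs (G : Game) (s p : Player) : Prop :=
  ∃ σ : Strategy, Legal G s p σ ∧
    ∀ h, ValidHist G s h → Follows s p σ h → Complete G s h →
      ¬ fills (G.edges p.other) (picked s p.other h)

/-- The possible results of the game, for a fixed starting player. -/
inductive Result : Type
  | Lwin : Result
  | draw : Result
  | Rwin : Result
deriving DecidableEq, Repr

/-- The result of `G` with optimal play, when `s` moves first, is `r`:
a win for a player means that player has a winning strategy, a draw means
both players have non-losing strategies. -/
def resultIs (G : Game) (s : Player) : Result → Prop
  | .Lwin => WinsAs G s .L
  | .Rwin => WinsAs G s .R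
  | .draw => NonLosingAs G s .L ∧ NonLosingAs G s .R

/-- An outcome: the pair of results with optimal play
(when Left starts, when Right starts). -/
abbrev Outcome := Result × Result

/-- `G` has outcome `o`. -/
def hasOutcome (G : Game) (o : Outcome) : Prop :=
  resultIs G .L o.1 ∧ resultIs G .R o.2

/-- Numerical value of a result, from Left's point of view:
Right wins < draw < Left wins. -/
def Result.val : Result → ℕ
  | .Rwin => 0
  | .draw => 1
  | .Lwin => 2

/-- The partial order `≤_L` on outcomes, comparing both components simultaneously
from Left's point of view. -/
def outLE (o o' : Outcome) : Prop := o.1.val ≤ o'.1.val ∧ o.2.val ≤ o'.2.val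

def oL : Outcome := (.Lwin, .Lwin)
def oLminus : Outcome := (.Lwin, .draw)
def oN : Outcome := (.Lwin, .Rwin)
def oD : Outcome := (.draw, .draw)
def oRminus : Outcome := (.draw, .Rwin)
def oR : Outcome := (.Rwin, .Rwin)

/-- The updated game `G_u` after Left has picked `u`. -/
def subL (G : Game) (u : ℕ) : Game where
  V := G.V.erase u
  EL := G.EL.image fun e => e.erase u
  ER := G.ER.filter fun e => u ∉ e

/-- The updated game `G^u` after Right has picked `u`. -/
def subR (G : Game) (u : ℕ) : Game where
  V := G.V.erase u
  EL := G.EL.filter fun e => u ∉ e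
  ER := G.ER.image fun e => e.erase u

/-- The updated game `G_u^v` after Left has picked `u` and Right has picked `v`. -/
def updLR (G : Game) (u v : ℕ) : Game where
  V := (G.V.erase u).erase v
  EL := (G.EL.filter fun e => v ∉ e).image fun e => e.erase u
  ER := (G.ER.filter fun e => u ∉ e).image fun e => e.erase v

/-- The disjoint union of two games. -/
def gunion (G G' : Game) : Game where
  V := G.V ∪ G'.V
  EL := G.EL ∪ G'.EL
  ER := G.ER ∪ G'.ER

section ValDef

instance fills.dec (E : Finset (Finset ℕ)) (S : Finset ℕ) : Decidable (fills E S) := by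
  unfold fills; infer_instance

instance ended.dec (G : Game) (s : Player) (h : List ℕ) : Decidable (ended G s h) := by
  unfold ended; infer_instance

lemma sdiff_insert_ssubset_left {V A B : Finset ℕ} {u : ℕ} (hu : u ∈ V \ (A ∪ B)) :
    V \ (insert u A ∪ B) ⊂ V \ (A ∪ B) := by
  simp only [Finset.mem_sdiff, Finset.mem_union] at hu
  constructor
  · intro x hx
    simp only [Finset.mem_sdiff, Finset.mem_union, Finset.mem_insert] at hx ⊢
    tauto
  · intro hsub
    have := hsub (by simp only [Finset.mem_sdiff, Finset.mem_union]; tauto : u ∈ V \ (A ∪ B))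
    simp [Finset.mem_sdiff] at this

lemma sdiff_insert_ssubset_right {V A B : Finset ℕ} {u : ℕ} (hu : u ∈ V \ (A ∪ B)) :
    V \ (A ∪ insert u B) ⊂ V \ (A ∪ B) := by
  simp only [Finset.mem_sdiff, Finset.mem_union] at hu
  constructor
  · intro x hx
    simp only [Finset.mem_sdiff, Finset.mem_union, Finset.mem_insert] at hx ⊢
    tauto
  · intro hsub
    have := hsub (by simp only [Finset.mem_sdiff, Finset.mem_union]; tauto : u ∈ V \ (A ∪ B))
    simp [Finset.mem_sdiff] at this

lemma sup'_attach' {α : Type*} (s : Finset α) (hne : s.Nonempty) (f : α → ℕ) :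
    s.attach.sup' hne.attach (fun x => f x.1) = s.sup' hne f := by
  apply le_antisymm
  · exact Finset.sup'_le _ _ fun x _ => Finset.le_sup' f x.2
  · exact Finset.sup'_le _ _ fun x hx => Finset.le_sup' (f := fun y => f y.1)
      (Finset.mem_attach s ⟨x, hx⟩)

lemma inf'_attach' {α : Type*} (s : Finset α) (hne : s.Nonempty) (f : α → ℕ) :
    s.attach.inf' hne.attach (fun x => f x.1) = s.inf' hne f := by
  apply le_antisymm
  · exact Finset.le_inf' _ _ fun x hx => Finset.inf'_le (f := fun y => f y.1)
      (Finset.mem_attach s ⟨x, hx⟩)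
  · exact Finset.le_inf' _ _ fun x _ => Finset.inf'_le f x.2

/-- Game value of a position (Left picks `A`, Right picks `B`, `t` to move):
`2` = Left wins, `1` = draw, `0` = Right wins. -/
def val (G : Game) (A B : Finset ℕ) (t : Player) : ℕ :=
  if fills G.EL A then 2
  else if fills G.ER B then 0
  else if hF : (G.V \ (A ∪ B)).Nonempty then
    match t with
    | .L => (G.V \ (A ∪ B)).attach.sup' hF.attach fun u => val G (insert u.1 A) B .R
    | .R => (G.V \ (A ∪ B)).attach.inf' hF.attach fun v => val G A (insert v.1 B) .L
  else 1
termination_by (G.V \ (A ∪ B)).card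
decreasing_by
  · exact Finset.card_lt_card (sdiff_insert_ssubset_left u.2)
  · exact Finset.card_lt_card (sdiff_insert_ssubset_right v.2)

lemma val_fillsL {G : Game} {A B t} (h : fills G.EL A) : val G A B t = 2 := by
  rw [val]; simp [h]

lemma val_fillsR {G : Game} {A B t} (h1 : ¬ fills G.EL A) (h2 : fills G.ER B) :
    val G A B t = 0 := by
  rw [val]; simp [h1, h2]

lemma val_full {G : Game} {A B t} (h1 : ¬ fills G.EL A) (h2 : ¬ fills G.ER B)
    (hF : ¬ (G.V \ (A ∪ B)).Nonempty) : val G A B t = 1 := by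
  rw [val]; simp [h1, h2, hF]

lemma val_L_eq {G : Game} {A B} (h1 : ¬ fills G.EL A) (h2 : ¬ fills G.ER B)
    (hF : (G.V \ (A ∪ B)).Nonempty) :
    val G A B .L = (G.V \ (A ∪ B)).sup' hF fun u => val G (insert u A) B .R := by
  rw [val]; simp only [h1, h2, hF, if_false, dif_pos]
  exact sup'_attach' _ hF (fun u => val G (insert u A) B .R)

lemma val_R_eq {G : Game} {A B} (h1 : ¬ fills G.EL A) (h2 : ¬ fills G.ER B)
    (hF : (G.V \ (A ∪ B)).Nonempty) :
    val G A B .R = (G.V \ (A ∪ B)).inf' hF fun v => val G A (insert v B) .L := by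
  rw [val]; simp only [h1, h2, hF, if_false, dif_pos]
  exact inf'_attach' _ hF (fun v => val G A (insert v B) .L)

lemma val_le_two (G : Game) : ∀ (n : ℕ) A B t, (G.V \ (A ∪ B)).card ≤ n → val G A B t ≤ 2
  | 0, A, B, t, hn => by
    by_cases h1 : fills G.EL A
    · rw [val_fillsL h1]
    · by_cases h2 : fills G.ER B
      · rw [val_fillsR h1 h2]; omega
      · rw [val_full h1 h2 (by
          intro hne; have := Finset.card_pos.mpr hne; omega)]
        omega
  | (n+1), A, B, t, hn => by
    by_cases h1 : fills G.EL A
    · rw [val_fillsL h1]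
    · by_cases h2 : fills G.ER B
      · rw [val_fillsR h1 h2]; omega
      · by_cases hF : (G.V \ (A ∪ B)).Nonempty
        · cases t with
          | L =>
            rw [val_L_eq h1 h2 hF]
            exact Finset.sup'_le _ _ fun u hu => val_le_two G n _ _ _ (by
              have := Finset.card_lt_card (sdiff_insert_ssubset_left hu); omega)
          | R =>
            rw [val_R_eq h1 h2 hF]
            obtain ⟨v, hv⟩ := hF
            exact le_trans (Finset.inf'_le _ hv) (val_le_two G n _ _ _ (by
              have := Finset.card_lt_card (sdiff_insert_ssubset_right hv); omega))
        · rw [val_full h1 h2 hF]; omega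

lemma val_le_two' (G : Game) (A B t) : val G A B t ≤ 2 :=
  val_le_two G _ A B t le_rfl

end ValDef
section Mono

lemma fills_mono {E : Finset (Finset ℕ)} {S T : Finset ℕ} (hST : S ⊆ T) (h : fills E S) :
    fills E T := by
  obtain ⟨e, he, hsub⟩ := h
  exact ⟨e, he, hsub.trans hST⟩

lemma free_anti_left {V A A₁ B : Finset ℕ} (h : A ⊆ A₁) : V \ (A₁ ∪ B) ⊆ V \ (A ∪ B) := by
  intro x hx
  simp only [Finset.mem_sdiff, Finset.mem_union] at hx ⊢
  exact ⟨hx.1, fun hc => hx.2 (hc.imp (fun hm => h hm) id)⟩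

lemma free_anti_right {V A B B₁ : Finset ℕ} (h : B ⊆ B₁) : V \ (A ∪ B₁) ⊆ V \ (A ∪ B) := by
  intro x hx
  simp only [Finset.mem_sdiff, Finset.mem_union] at hx ⊢
  exact ⟨hx.1, fun hc => hx.2 (hc.imp id (fun hm => h hm))⟩

lemma free_insert_left {V A B : Finset ℕ} (w : ℕ) :
    V \ (insert w A ∪ B) = (V \ (A ∪ B)).erase w := by
  ext x
  simp only [Finset.mem_sdiff, Finset.mem_union, Finset.mem_insert, Finset.mem_erase]
  tauto

lemma free_insert_right {V A B : Finset ℕ} (w : ℕ) :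
    V \ (A ∪ insert w B) = (V \ (A ∪ B)).erase w := by
  ext x
  simp only [Finset.mem_sdiff, Finset.mem_union, Finset.mem_insert, Finset.mem_erase]
  tauto

lemma card_free_insert_left {V A B : Finset ℕ} {w : ℕ} (hw : w ∈ V \ (A ∪ B)) {n : ℕ}
    (hn : (V \ (A ∪ B)).card ≤ n + 1) : (V \ (insert w A ∪ B)).card ≤ n := by
  rw [free_insert_left]
  have := Finset.card_erase_of_mem hw
  omega

lemma card_free_insert_right {V A B : Finset ℕ} {w : ℕ} (hw : w ∈ V \ (A ∪ B)) {n : ℕ}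
    (hn : (V \ (A ∪ B)).card ≤ n + 1) : (V \ (A ∪ insert w B)).card ≤ n := by
  rw [free_insert_right]
  have := Finset.card_erase_of_mem hw
  omega

lemma val_triple (G : Game) : ∀ n : ℕ,
    (∀ A B t A₁, A ⊆ A₁ → (G.V \ (A ∪ B)).card ≤ n → val G A B t ≤ val G A₁ B t)
    ∧ (∀ A B w, w ∈ G.V \ (A ∪ B) → (G.V \ (A ∪ B)).card ≤ n →
        val G A B .R ≤ val G (insert w A) B .R)
    ∧ (∀ A B, (G.V \ (A ∪ B)).card ≤ n → val G A B .R ≤ val G A B .L) := by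
  intro n
  induction n with
  | zero =>
    have hfree : ∀ A B : Finset ℕ, (G.V \ (A ∪ B)).card ≤ 0 → ¬ (G.V \ (A ∪ B)).Nonempty := by
      intro A B h hne
      have := Finset.card_pos.mpr hne; omega
    refine ⟨?_, ?_, ?_⟩
    · intro A B t A₁ hsub hn
      by_cases h1 : fills G.EL A
      · rw [val_fillsL h1, val_fillsL (fills_mono hsub h1)]
      · by_cases h1' : fills G.EL A₁
        · rw [val_fillsL h1']; exact val_le_two' G A B t
        · by_cases h2 : fills G.ER B
          · rw [val_fillsR h1 h2]; exact Nat.zero_le _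
          · rw [val_full h1 h2 (hfree A B hn),
              val_full h1' h2 (fun hne => hfree A B hn (hne.mono (free_anti_left hsub)))]
    · intro A B w hw hn
      exact absurd (Finset.card_pos.mpr ⟨w, hw⟩) (by omega)
    · intro A B hn
      by_cases h1 : fills G.EL A
      · rw [val_fillsL h1, val_fillsL h1]
      · by_cases h2 : fills G.ER B
        · rw [val_fillsR h1 h2]; exact Nat.zero_le _
        · rw [val_full h1 h2 (hfree A B hn), val_full h1 h2 (hfree A B hn)]
  | succ n IH =>
    obtain ⟨IHmono, IHadd, IHtempo⟩ := IH
    -- (1) monotonicity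
    have mono : ∀ A B t A₁, A ⊆ A₁ → (G.V \ (A ∪ B)).card ≤ n + 1 →
        val G A B t ≤ val G A₁ B t := by
      intro A B t A₁ hsub hn
      by_cases h1 : fills G.EL A
      · rw [val_fillsL h1, val_fillsL (fills_mono hsub h1)]
      · by_cases h1' : fills G.EL A₁
        · rw [val_fillsL h1']; exact val_le_two' G A B t
        · by_cases h2 : fills G.ER B
          · rw [val_fillsR h1 h2]; exact Nat.zero_le _
          · by_cases hFA : (G.V \ (A ∪ B)).Nonempty
            · cases t with
              | R =>
                by_cases hFA₁ : (G.V \ (A₁ ∪ B)).Nonempty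
                · rw [val_R_eq h1 h2 hFA, val_R_eq h1' h2 hFA₁]
                  apply Finset.le_inf'
                  intro v hv
                  have hv' : v ∈ G.V \ (A ∪ B) := free_anti_left hsub hv
                  calc (G.V \ (A ∪ B)).inf' hFA (fun v => val G A (insert v B) .L)
                      ≤ val G A (insert v B) .L := Finset.inf'_le _ hv'
                    _ ≤ val G A₁ (insert v B) .L :=
                        IHmono A (insert v B) .L A₁ hsub (card_free_insert_right hv' hn)
                · rw [val_full h1' h2 hFA₁, val_R_eq h1 h2 hFA]
                  obtain ⟨v, hv⟩ := hFA
                  have hvA₁ : v ∈ A₁ := by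
                    by_contra hc
                    refine hFA₁ ⟨v, ?_⟩
                    simp only [Finset.mem_sdiff, Finset.mem_union] at hv ⊢
                    tauto
                  refine le_trans (Finset.inf'_le _ hv) ?_
                  refine le_trans (IHmono A (insert v B) .L A₁ hsub
                    (card_free_insert_right hv hn)) ?_
                  by_cases h2' : fills G.ER (insert v B)
                  · rw [val_fillsR h1' h2']; omega
                  · rw [val_full h1' h2' (fun hne => hFA₁ (hne.mono
                      (free_anti_right (Finset.subset_insert v B))))]
              | L =>
                rw [val_L_eq h1 h2 hFA]
                apply Finset.sup'_le
                intro u hu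
                by_cases huA₁ : u ∈ A₁
                · have hm : (G.V \ (A₁ ∪ B)).card ≤ n := by
                    have hsubf : G.V \ (A₁ ∪ B) ⊆ G.V \ (insert u A ∪ B) :=
                      free_anti_left (Finset.insert_subset huA₁ hsub)
                    have := Finset.card_le_card hsubf
                    have := card_free_insert_left hu hn
                    omega
                  calc val G (insert u A) B .R
                      ≤ val G A₁ B .R := IHmono (insert u A) B .R A₁
                        (Finset.insert_subset huA₁ hsub) (card_free_insert_left hu hn)
                    _ ≤ val G A₁ B .L := IHtempo A₁ B hm
                · have hu₁ : u ∈ G.V \ (A₁ ∪ B) := by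
                    simp only [Finset.mem_sdiff, Finset.mem_union] at hu ⊢
                    tauto
                  rw [val_L_eq h1' h2 ⟨u, hu₁⟩]
                  calc val G (insert u A) B .R
                      ≤ val G (insert u A₁) B .R := IHmono (insert u A) B .R (insert u A₁)
                        (Finset.insert_subset_insert u hsub) (card_free_insert_left hu hn)
                    _ ≤ _ := Finset.le_sup' (fun u => val G (insert u A₁) B .R) hu₁
            · rw [val_full h1 h2 hFA]
              by_cases hFA₁ : (G.V \ (A₁ ∪ B)).Nonempty
              · exact absurd (hFA₁.mono (free_anti_left hsub)) hFA
              · rw [val_full h1' h2 hFA₁]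
    -- (2) extra stone for Left on Right's turn
    have vadd : ∀ A B w, w ∈ G.V \ (A ∪ B) → (G.V \ (A ∪ B)).card ≤ n + 1 →
        val G A B .R ≤ val G (insert w A) B .R := by
      intro A B w hw hn
      by_cases h1 : fills G.EL A
      · rw [val_fillsL h1, val_fillsL (fills_mono (Finset.subset_insert w A) h1)]
      · by_cases h2 : fills G.ER B
        · rw [val_fillsR h1 h2]; exact Nat.zero_le _
        · have hF : (G.V \ (A ∪ B)).Nonempty := ⟨w, hw⟩
          rw [val_R_eq h1 h2 hF]
          by_cases h1' : fills G.EL (insert w A)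
          · rw [val_fillsL h1']
            obtain ⟨v, hv⟩ := hF
            exact le_trans (Finset.inf'_le _ hv) (val_le_two' G A (insert v B) .L)
          · by_cases hF' : (G.V \ (insert w A ∪ B)).Nonempty
            · rw [val_R_eq h1' h2 hF']
              apply Finset.le_inf'
              intro v hv
              have hv' : v ∈ G.V \ (A ∪ B) := free_anti_left (Finset.subset_insert w A) hv
              calc (G.V \ (A ∪ B)).inf' hF (fun v => val G A (insert v B) .L)
                  ≤ val G A (insert v B) .L := Finset.inf'_le _ hv'
                _ ≤ val G (insert w A) (insert v B) .L := IHmono A (insert v B) .L _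
                    (Finset.subset_insert w A) (card_free_insert_right hv' hn)
            · rw [val_full h1' h2 hF']
              refine le_trans (Finset.inf'_le _ hw) ?_
              by_cases h2' : fills G.ER (insert w B)
              · rw [val_fillsR h1 h2']; omega
              · rw [val_full h1 h2' (by
                  rw [free_insert_right]; rw [free_insert_left] at hF'; exact hF')]
    -- (3) tempo
    have tempo : ∀ A B, (G.V \ (A ∪ B)).card ≤ n + 1 → val G A B .R ≤ val G A B .L := by
      intro A B hn
      by_cases h1 : fills G.EL A
      · rw [val_fillsL h1, val_fillsL h1]
      · by_cases h2 : fills G.ER B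
        · rw [val_fillsR h1 h2]; exact Nat.zero_le _
        · by_cases hF : (G.V \ (A ∪ B)).Nonempty
          · obtain ⟨w, hw⟩ := hF
            rw [val_L_eq h1 h2 ⟨w, hw⟩]
            exact le_trans (vadd A B w hw hn)
              (Finset.le_sup' (fun u => val G (insert u A) B .R) hw)
          · rw [val_full h1 h2 hF, val_full h1 h2 hF]
    exact ⟨mono, vadd, tempo⟩

lemma val_mono {G : Game} {A B : Finset ℕ} (t : Player) {A₁ : Finset ℕ} (hsub : A ⊆ A₁) :
    val G A B t ≤ val G A₁ B t :=
  (val_triple G _).1 A B t A₁ hsub le_rfl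

lemma val_addL {G : Game} {A B : Finset ℕ} {w : ℕ} (hw : w ∈ G.V \ (A ∪ B)) :
    val G A B .R ≤ val G (insert w A) B .R :=
  (val_triple G _).2.1 A B w hw le_rfl

lemma val_tempo {G : Game} (A B : Finset ℕ) : val G A B .R ≤ val G A B .L :=
  (val_triple G _).2.2 A B le_rfl

end Mono
section Swap

/-- The game with the roles of the players exchanged. -/
def swapG (G : Game) : Game := ⟨G.V, G.ER, G.EL⟩

lemma sup'_two_sub {α : Type*} (s : Finset α) (hne : s.Nonempty) (f : α → ℕ)
    (hf : ∀ x ∈ s, f x ≤ 2) : s.sup' hne (fun x => 2 - f x) = 2 - s.inf' hne f := by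
  apply le_antisymm
  · exact Finset.sup'_le _ _ fun x hx => Nat.sub_le_sub_left (Finset.inf'_le _ hx) 2
  · obtain ⟨x₀, hx₀, he⟩ := Finset.exists_mem_eq_inf' hne f
    rw [he]
    exact Finset.le_sup' (fun x => 2 - f x) hx₀

lemma inf'_two_sub {α : Type*} (s : Finset α) (hne : s.Nonempty) (f : α → ℕ)
    (hf : ∀ x ∈ s, f x ≤ 2) : s.inf' hne (fun x => 2 - f x) = 2 - s.sup' hne f := by
  apply le_antisymm
  · obtain ⟨x₀, hx₀, he⟩ := Finset.exists_mem_eq_sup' hne f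
    rw [he]
    exact Finset.inf'_le (fun x => 2 - f x) hx₀
  · exact Finset.le_inf' _ _ fun x hx => Nat.sub_le_sub_left (Finset.le_sup' _ hx) 2

lemma val_swap (G : Game) : ∀ (n : ℕ) A B t, (G.V \ (A ∪ B)).card ≤ n →
    (¬ fills G.ER A ∨ ¬ fills G.EL B) →
    val (swapG G) A B t = 2 - val G B A t.other := by
  intro n
  induction n with
  | zero =>
    intro A B t hn hcond
    have hfree : ¬ (G.V \ (A ∪ B)).Nonempty := by
      intro hne; have := Finset.card_pos.mpr hne; omega
    have hcomm : G.V \ (B ∪ A) = G.V \ (A ∪ B) := by rw [Finset.union_comm]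
    by_cases hA : fills G.ER A
    · have hB : ¬ fills G.EL B := hcond.resolve_left (not_not_intro hA)
      rw [val_fillsL (show fills (swapG G).EL A from hA), val_fillsR hB hA]
    · by_cases hB : fills G.EL B
      · rw [val_fillsR (show ¬ fills (swapG G).EL A from hA) (show fills (swapG G).ER B from hB),
          val_fillsL hB]
      · rw [val_full (show ¬ fills (swapG G).EL A from hA)
          (show ¬ fills (swapG G).ER B from hB) (show ¬ ((swapG G).V \ (A ∪ B)).Nonempty from hfree),
          val_full hB hA (hcomm ▸ hfree)]
  | succ n IH =>
    intro A B t hn hcond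
    have hcomm : G.V \ (B ∪ A) = G.V \ (A ∪ B) := by rw [Finset.union_comm]
    by_cases hA : fills G.ER A
    · have hB : ¬ fills G.EL B := hcond.resolve_left (not_not_intro hA)
      rw [val_fillsL (show fills (swapG G).EL A from hA), val_fillsR hB hA]
    · by_cases hB : fills G.EL B
      · rw [val_fillsR (show ¬ fills (swapG G).EL A from hA) (show fills (swapG G).ER B from hB),
          val_fillsL hB]
      · by_cases hF : (G.V \ (A ∪ B)).Nonempty
        · have hF' : (G.V \ (B ∪ A)).Nonempty := hcomm ▸ hF
          cases t with
          | L =>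
            rw [val_L_eq (show ¬ fills (swapG G).EL A from hA)
              (show ¬ fills (swapG G).ER B from hB) hF,
              show Player.other .L = .R from rfl, val_R_eq hB hA hF']
            simp only [hcomm]
            rw [← sup'_two_sub _ hF _ (fun x _ => val_le_two' G B (insert x A) .L)]
            exact Finset.sup'_congr hF rfl fun u hu =>
              IH (insert u A) B .R (card_free_insert_left hu hn) (Or.inr hB)
          | R =>
            rw [val_R_eq (show ¬ fills (swapG G).EL A from hA)
              (show ¬ fills (swapG G).ER B from hB) hF,
              show Player.other .R = .L from rfl, val_L_eq hB hA hF']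
            simp only [hcomm]
            rw [← inf'_two_sub _ hF _ (fun x _ => val_le_two' G (insert x B) A .R)]
            exact Finset.inf'_congr hF rfl fun v hv =>
              IH A (insert v B) .L (card_free_insert_right hv hn) (Or.inl hA)
        · rw [val_full (show ¬ fills (swapG G).EL A from hA)
            (show ¬ fills (swapG G).ER B from hB) hF, val_full hB hA (hcomm ▸ hF)]
end Swap
section UnionVal

variable {G G' : Game}

lemma fills_union_iff {E E' : Finset (Finset ℕ)} {A A' : Finset ℕ}
    (hdisj : Disjoint G.V G'.V)
    (hE : ∀ e ∈ E, e ⊆ G.V) (hE' : ∀ e ∈ E', e ⊆ G'.V)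
    (hA : A ⊆ G.V) (hA' : A' ⊆ G'.V) :
    fills (E ∪ E') (A ∪ A') ↔ fills E A ∨ fills E' A' := by
  constructor
  · rintro ⟨e, he, hsub⟩
    rcases Finset.mem_union.mp he with he | he
    · refine Or.inl ⟨e, he, fun x hx => ?_⟩
      rcases Finset.mem_union.mp (hsub hx) with h | h
      · exact h
      · exact absurd (hE e he hx) (fun hc => Finset.disjoint_left.mp hdisj hc (hA' h))
    · refine Or.inr ⟨e, he, fun x hx => ?_⟩
      rcases Finset.mem_union.mp (hsub hx) with h | h
      · exact absurd (hE' e he hx) (fun hc => Finset.disjoint_left.mp hdisj (hA h) hc)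
      · exact h
  · rintro (h | h)
    · exact fills_mono Finset.subset_union_left ⟨h.choose, Finset.mem_union_left _ h.choose_spec.1,
        h.choose_spec.2⟩
    · exact fills_mono Finset.subset_union_right ⟨h.choose, Finset.mem_union_right _ h.choose_spec.1,
        h.choose_spec.2⟩

lemma free_union {A B A' B' : Finset ℕ} (hdisj : Disjoint G.V G'.V)
    (hA : A ⊆ G.V) (hB : B ⊆ G.V) (hA' : A' ⊆ G'.V) (hB' : B' ⊆ G'.V) :
    (G.V ∪ G'.V) \ ((A ∪ A') ∪ (B ∪ B')) = (G.V \ (A ∪ B)) ∪ (G'.V \ (A' ∪ B')) := by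
  ext x
  have hd : ∀ y, y ∈ G.V → y ∈ G'.V → False := fun y h h' => Finset.disjoint_left.mp hdisj h h'
  simp only [Finset.mem_sdiff, Finset.mem_union]
  constructor
  · rintro ⟨hx | hx, hnx⟩
    · exact Or.inl ⟨hx, fun hc => hnx (by tauto)⟩
    · exact Or.inr ⟨hx, fun hc => hnx (by tauto)⟩
  · rintro (⟨hx, hnx⟩ | ⟨hx, hnx⟩)
    · exact ⟨Or.inl hx, by
        rintro ((h | h) | (h | h))
        · exact hnx (Or.inl h)
        · exact hd x hx (hA' h)
        · exact hnx (Or.inr h)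
        · exact hd x hx (hB' h)⟩
    · exact ⟨Or.inr hx, by
        rintro ((h | h) | (h | h))
        · exact hd x (hA h) hx
        · exact hnx (Or.inl h)
        · exact hd x (hB h) hx
        · exact hnx (Or.inr h)⟩

lemma val_union_ge (G G' : Game) (hG : WellFormed G) (hG' : WellFormed G')
    (hdisj : Disjoint G.V G'.V) :
    ∀ n (A B A' B' : Finset ℕ), A ⊆ G.V → B ⊆ G.V → A' ⊆ G'.V → B' ⊆ G'.V →
    ((gunion G G').V \ ((A ∪ A') ∪ (B ∪ B'))).card ≤ n →
    ((∀ t, (fills G.EL A ∨ 1 ≤ val G A B .R) →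
        val G' A' B' t ≤ val (gunion G G') (A ∪ A') (B ∪ B') t)
     ∧ ((fills G.EL A ∨ 1 ≤ val G A B .L) →
        val G' A' B' .R ≤ val (gunion G G') (A ∪ A') (B ∪ B') .L)) := by
  intro n
  induction n using Nat.strong_induction_on with
  | _ n IH =>
  intro A B A' B' hA hB hA' hB' hn
  set U := gunion G G' with hU
  have hfree : U.V \ ((A ∪ A') ∪ (B ∪ B')) = (G.V \ (A ∪ B)) ∪ (G'.V \ (A' ∪ B')) :=
    free_union hdisj hA hB hA' hB'
  have hfillsL : fills U.EL (A ∪ A') ↔ fills G.EL A ∨ fills G'.EL A' :=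
    fills_union_iff hdisj (fun e he => (hG.1 e he).1) (fun e he => (hG'.1 e he).1) hA hA'
  have hfillsR : fills U.ER (B ∪ B') ↔ fills G.ER B ∨ fills G'.ER B' :=
    fills_union_iff hdisj (fun e he => (hG.2 e he).1) (fun e he => (hG'.2 e he).1) hB hB'
  -- absorbing case: Left has filled an edge of the union
  have habs : ∀ t t', fills U.EL (A ∪ A') → val G' A' B' t ≤ val U (A ∪ A') (B ∪ B') t' := by
    intro t t' hf
    rw [val_fillsL hf]
    exact val_le_two' G' A' B' t
  by_cases hfA : fills G.EL A
  · exact ⟨fun t _ => habs t t (hfillsL.mpr (Or.inl hfA)), fun _ => habs .R .L (hfillsL.mpr (Or.inl hfA))⟩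
  by_cases hfA' : fills G'.EL A'
  · exact ⟨fun t _ => habs t t (hfillsL.mpr (Or.inr hfA')), fun _ => habs .R .L (hfillsL.mpr (Or.inr hfA'))⟩
  have hUL : ¬ fills U.EL (A ∪ A') := fun hc => by rcases hfillsL.mp hc with h | h <;> tauto
  by_cases hfB : fills G.ER B
  · constructor
    · intro t hinv
      have := hinv.resolve_left hfA
      rw [val_fillsR hfA hfB] at this; omega
    · intro hinv
      have := hinv.resolve_left hfA
      rw [val_fillsR hfA hfB] at this; omega
  by_cases hfB' : fills G'.ER B'
  · constructor
    · intro t _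
      rw [val_fillsR hfA' hfB']; exact Nat.zero_le _
    · intro _
      rw [val_fillsR hfA' hfB']; exact Nat.zero_le _
  have hUR : ¬ fills U.ER (B ∪ B') := fun hc => by rcases hfillsR.mp hc with h | h <;> tauto
  by_cases hFU : (U.V \ ((A ∪ A') ∪ (B ∪ B'))).Nonempty
  swap
  · -- the union position is a full-board draw
    have hFG' : ¬ (G'.V \ (A' ∪ B')).Nonempty := fun hne =>
      hFU (by rw [hfree]; exact hne.mono Finset.subset_union_right)
    constructor
    · intro t _; rw [val_full hfA' hfB' hFG', val_full hUL hUR hFU]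
    · intro _; rw [val_full hfA' hfB' hFG', val_full hUL hUR hFU]
  have hn1 : 1 ≤ n := by
    have := Finset.card_pos.mpr hFU; omega
  have hmem : ∀ {x}, x ∈ G.V \ (A ∪ B) → x ∈ U.V \ ((A ∪ A') ∪ (B ∪ B')) := by
    intro x hx; rw [hfree]; exact Finset.mem_union_left _ hx
  have hmem' : ∀ {x}, x ∈ G'.V \ (A' ∪ B') → x ∈ U.V \ ((A ∪ A') ∪ (B ∪ B')) := by
    intro x hx; rw [hfree]; exact Finset.mem_union_right _ hx
  -- phase 0, Right to move in the union (used by both parts below)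
  constructor
  · intro t hinv
    have hvGR : 1 ≤ val G A B .R := hinv.resolve_left hfA
    cases t with
    | L =>
      rw [val_L_eq hUL hUR hFU]
      by_cases hFG' : (G'.V \ (A' ∪ B')).Nonempty
      · rw [val_L_eq hfA' hfB' hFG']
        apply Finset.sup'_le
        intro u hu
        have huU := hmem' hu
        have hsets : A ∪ insert u A' = insert u (A ∪ A') := Finset.union_insert ..
        have hmeas : (U.V \ ((A ∪ insert u A') ∪ (B ∪ B'))).card ≤ n - 1 := by
          rw [hsets]
          exact card_free_insert_left huU (by omega)
        have hstep := ((IH (n-1) (by omega) A B (insert u A') B' hA hB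
          (Finset.insert_subset (Finset.mem_sdiff.mp hu).1 hA') hB' hmeas).1 .R
          (Or.inr hvGR))
        rw [hsets] at hstep
        exact le_trans hstep
          (Finset.le_sup' (fun u => val U (insert u (A ∪ A')) (B ∪ B') .R) huU)
      · rw [val_full hfA' hfB' hFG']
        have hFG : (G.V \ (A ∪ B)).Nonempty := by
          rcases (hfree ▸ hFU) with ⟨x, hx⟩
          rcases Finset.mem_union.mp hx with h | h
          · exact ⟨x, h⟩
          · exact absurd ⟨x, h⟩ hFG'
        obtain ⟨u, hu⟩ := hFG
        have huU := hmem hu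
        have h1' : (1:ℕ) = val G' A' B' .R := (val_full hfA' hfB' hFG').symm
        have hsets : insert u A ∪ A' = insert u (A ∪ A') := Finset.insert_union ..
        have hmeas : (U.V \ ((insert u A ∪ A') ∪ (B ∪ B'))).card ≤ n - 1 := by
          rw [hsets]
          exact card_free_insert_left huU (by omega)
        have hstep := ((IH (n-1) (by omega) (insert u A) B A' B'
          (Finset.insert_subset (Finset.mem_sdiff.mp hu).1 hA) hB hA' hB' hmeas).1 .R
          (Or.inr (le_trans hvGR (val_addL hu))))
        rw [hsets] at hstep
        rw [h1']
        exact le_trans hstep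
          (Finset.le_sup' (fun u => val U (insert u (A ∪ A')) (B ∪ B') .R) huU)
    | R =>
      rw [val_R_eq hUL hUR hFU]
      apply Finset.le_inf'
      intro v hv
      rcases Finset.mem_union.mp (hfree ▸ hv) with hvG | hvG'
      · -- Right moves in G
        have h1v : 1 ≤ val G A (insert v B) .L := by
          rw [val_R_eq hfA hfB ⟨v, hvG⟩] at hvGR
          exact le_trans hvGR (Finset.inf'_le _ hvG)
        have hsets : insert v B ∪ B' = insert v (B ∪ B') := Finset.insert_union ..
        have hmeas : (U.V \ ((A ∪ A') ∪ (insert v B ∪ B'))).card ≤ n - 1 := by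
          rw [hsets]
          exact card_free_insert_right (hmem hvG) (by omega)
        have hstep := ((IH (n-1) (by omega) A (insert v B) A' B' hA
          (Finset.insert_subset (Finset.mem_sdiff.mp hvG).1 hB) hA' hB' hmeas).2
          (Or.inr h1v))
        rw [hsets] at hstep
        exact hstep
      · -- Right moves in G'
        have hle : val G' A' B' .R ≤ val G' A' (insert v B') .L := by
          rw [val_R_eq hfA' hfB' ⟨v, hvG'⟩]
          exact Finset.inf'_le _ hvG'
        have hsets : B ∪ insert v B' = insert v (B ∪ B') := Finset.union_insert ..
        have hmeas : (U.V \ ((A ∪ A') ∪ (B ∪ insert v B'))).card ≤ n - 1 := by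
          rw [hsets]
          exact card_free_insert_right (hmem' hvG') (by omega)
        have hstep := ((IH (n-1) (by omega) A B A' (insert v B') hA hB hA'
          (Finset.insert_subset (Finset.mem_sdiff.mp hvG').1 hB') hmeas).1 .L
          (Or.inr hvGR))
        rw [hsets] at hstep
        exact le_trans hle hstep
  · -- phase 1 : Left owes a response in G
    intro hinv
    have hvGL : 1 ≤ val G A B .L := hinv.resolve_left hfA
    rw [val_L_eq hUL hUR hFU]
    by_cases hFG : (G.V \ (A ∪ B)).Nonempty
    · obtain ⟨u₀, hu₀, he⟩ := Finset.exists_mem_eq_sup' hFG (fun u => val G (insert u A) B .R)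
      have h1 : 1 ≤ val G (insert u₀ A) B .R := by
        rw [val_L_eq hfA hfB hFG, he] at hvGL
        exact hvGL
      have huU := hmem hu₀
      have hsets : insert u₀ A ∪ A' = insert u₀ (A ∪ A') := Finset.insert_union ..
      have hmeas : (U.V \ ((insert u₀ A ∪ A') ∪ (B ∪ B'))).card ≤ n - 1 := by
        rw [hsets]
        exact card_free_insert_left huU (by omega)
      have hstep := ((IH (n-1) (by omega) (insert u₀ A) B A' B'
        (Finset.insert_subset (Finset.mem_sdiff.mp hu₀).1 hA) hB hA' hB' hmeas).1 .R
        (Or.inr h1))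
      rw [hsets] at hstep
      exact le_trans hstep
        (Finset.le_sup' (fun u => val U (insert u (A ∪ A')) (B ∪ B') .R) huU)
    · have h1 : 1 ≤ val G A B .R := le_of_eq (val_full hfA hfB hFG).symm
      have hFG' : (G'.V \ (A' ∪ B')).Nonempty := by
        rcases (hfree ▸ hFU) with ⟨x, hx⟩
        rcases Finset.mem_union.mp hx with h | h
        · exact absurd ⟨x, h⟩ hFG
        · exact ⟨x, h⟩
      obtain ⟨u, hu⟩ := hFG'
      have huU := hmem' hu
      have hle : val G' A' B' .R ≤ val G' (insert u A') B' .R := val_addL hu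
      have hsets : A ∪ insert u A' = insert u (A ∪ A') := Finset.union_insert ..
      have hmeas : (U.V \ ((A ∪ insert u A') ∪ (B ∪ B'))).card ≤ n - 1 := by
        rw [hsets]
        exact card_free_insert_left huU (by omega)
      have hstep := ((IH (n-1) (by omega) A B (insert u A') B' hA hB
        (Finset.insert_subset (Finset.mem_sdiff.mp hu).1 hA') hB' hmeas).1 .R
        (Or.inr h1))
      rw [hsets] at hstep
      exact le_trans hle (le_trans hstep
        (Finset.le_sup' (fun u => val U (insert u (A ∪ A')) (B ∪ B') .R) huU))

end UnionVal
section UnionValEq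

lemma Player.other_other : ∀ p : Player, p.other.other = p
  | .L => rfl
  | .R => rfl

lemma not_fills_empty {E : Finset (Finset ℕ)} {V : Finset ℕ}
    (hE : ∀ e ∈ E, e ⊆ V ∧ e.Nonempty) : ¬ fills E ∅ := by
  rintro ⟨e, he, hsub⟩
  obtain ⟨x, hx⟩ := (hE e he).2
  exact absurd (hsub hx) (Finset.notMem_empty x)

lemma wellFormed_swap {G : Game} (hG : WellFormed G) : WellFormed (swapG G) :=
  ⟨hG.2, hG.1⟩

lemma wellFormed_gunion {G G' : Game} (hG : WellFormed G) (hG' : WellFormed G') :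
    WellFormed (gunion G G') := by
  constructor
  · intro e he
    rcases Finset.mem_union.mp he with h | h
    · exact ⟨(hG.1 e h).1.trans Finset.subset_union_left, (hG.1 e h).2⟩
    · exact ⟨(hG'.1 e h).1.trans Finset.subset_union_right, (hG'.1 e h).2⟩
  · intro e he
    rcases Finset.mem_union.mp he with h | h
    · exact ⟨(hG.2 e h).1.trans Finset.subset_union_left, (hG.2 e h).2⟩
    · exact ⟨(hG'.2 e h).1.trans Finset.subset_union_right, (hG'.2 e h).2⟩

lemma val_union_eq {G G' : Game} (hG : WellFormed G) (hG' : WellFormed G')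
    (hdisj : Disjoint G.V G'.V) (hDL : val G ∅ ∅ .L = 1) (hDR : val G ∅ ∅ .R = 1)
    (t : Player) : val (gunion G G') ∅ ∅ t = val G' ∅ ∅ t := by
  apply le_antisymm
  · -- via the swapped games
    have hge := (val_union_ge (swapG G) (swapG G') (wellFormed_swap hG) (wellFormed_swap hG')
      hdisj ((gunion (swapG G) (swapG G')).V \ ((∅ ∪ ∅) ∪ (∅ ∪ ∅))).card
      ∅ ∅ ∅ ∅ (Finset.empty_subset _) (Finset.empty_subset _) (Finset.empty_subset _)
      (Finset.empty_subset _) le_rfl).1 t.other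
      (Or.inr (by
        rw [val_swap G _ ∅ ∅ .R le_rfl (Or.inl (not_fills_empty hG.2))]
        rw [show Player.other .R = .L from rfl, hDL]))
    rw [Finset.empty_union] at hge
    have hswap : gunion (swapG G) (swapG G') = swapG (gunion G G') := rfl
    rw [hswap, val_swap G' _ ∅ ∅ t.other le_rfl (Or.inl (not_fills_empty hG'.2)),
      val_swap (gunion G G') _ ∅ ∅ t.other le_rfl
        (Or.inl (not_fills_empty (wellFormed_gunion hG hG').2)),
      Player.other_other] at hge
    have h1 := val_le_two' (gunion G G') ∅ ∅ t
    have h2 := val_le_two' G' ∅ ∅ t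
    omega
  · have hle := (val_union_ge G G' hG hG' hdisj
      ((gunion G G').V \ ((∅ ∪ ∅) ∪ (∅ ∪ ∅))).card
      ∅ ∅ ∅ ∅ (Finset.empty_subset _) (Finset.empty_subset _) (Finset.empty_subset _)
      (Finset.empty_subset _) le_rfl).1 t (Or.inr (le_of_eq hDR.symm))
    rwa [Finset.empty_union] at hle

end UnionValEq
section Hist

lemma player_cases (p : Player) : p = .L ∨ p = .R := by cases p <;> simp

lemma Player.other_inj {p q : Player} : p.other = q.other ↔ p = q := by
  cases p <;> cases q <;> simp [Player.other]

lemma mover_zero (s : Player) : mover s 0 = s := by simp [mover]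

lemma mover_succ (s : Player) (n : ℕ) : mover s (n + 1) = (mover s n).other := by
  rcases Nat.mod_two_eq_zero_or_one n with h | h
  · have h' : (n + 1) % 2 = 1 := by omega
    simp [mover, h, h']
  · have h' : (n + 1) % 2 = 0 := by omega
    simp [mover, h, h', Player.other_other]

lemma mover_other (s : Player) (n : ℕ) : mover s.other n = (mover s n).other := by
  unfold mover; split <;> rfl

lemma getD_concat_length (h : List ℕ) (x : ℕ) : (h ++ [x]).getD h.length 0 = x := by
  rw [List.getD_append_right _ _ _ _ le_rfl]
  simp

lemma getD_concat_lt (h : List ℕ) (x : ℕ) {i : ℕ} (hi : i < h.length) :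
    (h ++ [x]).getD i 0 = h.getD i 0 :=
  List.getD_append _ _ _ _ hi

lemma getD_take' {h : List ℕ} {i k : ℕ} (hik : i < k) (hk : i < h.length) :
    (h.take k).getD i 0 = h.getD i 0 := by
  have hlen : i < (h.take k).length := by
    simp only [List.length_take]; omega
  rw [List.getD_eq_getElem _ _ hlen, List.getD_eq_getElem _ _ hk]
  simp

lemma picked_nil (s p : Player) : picked s p [] = ∅ := by
  simp [picked]

lemma picked_concat (s p : Player) (h : List ℕ) (x : ℕ) :
    picked s p (h ++ [x]) =
      if mover s h.length = p then insert x (picked s p h) else picked s p h := by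
  unfold picked
  have hlen : (h ++ [x]).length = h.length + 1 := by simp
  rw [hlen, Finset.range_add_one, Finset.filter_insert]
  have himg : (((Finset.range h.length).filter fun i => mover s i = p).image
      fun i => (h ++ [x]).getD i 0) =
      ((Finset.range h.length).filter fun i => mover s i = p).image fun i => h.getD i 0 := by
    apply Finset.image_congr
    intro i hi
    simp only [Finset.coe_filter, Set.mem_setOf_eq, Finset.mem_range] at hi
    exact getD_concat_lt h x hi.1
  by_cases hmov : mover s h.length = p
  · rw [if_pos hmov, if_pos hmov, Finset.image_insert, getD_concat_length, himg]
  · rw [if_neg hmov, if_neg hmov, himg]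

lemma picked_union (s : Player) (h : List ℕ) :
    picked s .L h ∪ picked s .R h = h.toFinset := by
  ext y
  simp only [picked, Finset.mem_union, Finset.mem_image, Finset.mem_filter, Finset.mem_range,
    List.mem_toFinset]
  constructor
  · rintro (⟨i, ⟨hi, _⟩, hy⟩ | ⟨i, ⟨hi, _⟩, hy⟩) <;>
    · subst hy
      rw [List.getD_eq_getElem _ _ hi]
      exact List.getElem_mem _
  · intro hy
    obtain ⟨i, hi, hy⟩ := List.mem_iff_getElem.mp hy
    rcases player_cases (mover s i) with hm | hm
    · exact Or.inl ⟨i, ⟨hi, hm⟩, by rw [List.getD_eq_getElem _ _ hi]; exact hy⟩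
    · exact Or.inr ⟨i, ⟨hi, hm⟩, by rw [List.getD_eq_getElem _ _ hi]; exact hy⟩

lemma picked_subset (s p : Player) (h : List ℕ) : picked s p h ⊆ h.toFinset := by
  rw [← picked_union s h]
  cases p
  · exact Finset.subset_union_left
  · exact Finset.subset_union_right

lemma toFinset_subset_V {G : Game} {s : Player} {h : List ℕ} (hv : ValidHist G s h) :
    h.toFinset ⊆ G.V := fun x hx => hv.2.1 x (List.mem_toFinset.mp hx)

lemma length_le_card {G : Game} {s : Player} {h : List ℕ} (hv : ValidHist G s h) :
    h.length ≤ G.V.card := by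
  rw [← List.toFinset_card_of_nodup hv.1]
  exact Finset.card_le_card (toFinset_subset_V hv)

lemma valid_take {G : Game} {s : Player} {h : List ℕ} (hv : ValidHist G s h) (k : ℕ) :
    ValidHist G s (h.take k) := by
  refine ⟨hv.1.sublist (List.take_sublist k h), fun x hx => hv.2.1 x ((List.take_sublist k h).mem hx), ?_⟩
  intro j hj
  rw [List.take_take]
  have hj' : j < h.length := lt_of_lt_of_le hj (by simp [List.length_take])
  have : min j k = j := by
    simp only [List.length_take] at hj; omega
  rw [this]
  exact hv.2.2 j hj'

lemma follows_take {s p : Player} {σ : Strategy} {h : List ℕ} (hf : Follows s p σ h) (k : ℕ) :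
    Follows s p σ (h.take k) := by
  intro j hj hm
  have hjk : j < k := by simp only [List.length_take] at hj; omega
  have hjh : j < h.length := by simp only [List.length_take] at hj; omega
  rw [getD_take' hjk hjh, List.take_take, min_eq_left (le_of_lt hjk)]
  exact hf j hjh hm

lemma valid_concat_facts {G : Game} {s : Player} {h : List ℕ} {x : ℕ}
    (hv : ValidHist G s (h ++ [x])) :
    ValidHist G s h ∧ ¬ ended G s h ∧ x ∈ G.V ∧ x ∉ h := by
  have h1 : ValidHist G s h := by
    have := valid_take hv h.length
    rwa [List.take_left] at this
  have h2 : ¬ ended G s h := by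
    have := hv.2.2 h.length (by simp)
    rwa [List.take_left] at this
  have h3 : x ∈ G.V := hv.2.1 x (by simp)
  have h4 : x ∉ h := by
    have := hv.1
    rw [List.nodup_append] at this
    intro hc
    exact this.2.2 x hc x (by simp) rfl
  exact ⟨h1, h2, h3, h4⟩

lemma not_both_fills {G : Game} {s : Player} {h : List ℕ} (hWF : WellFormed G)
    (hv : ValidHist G s h) :
    ¬ (fills G.EL (picked s .L h) ∧ fills G.ER (picked s .R h)) := by
  rcases List.eq_nil_or_concat' h with rfl | ⟨h₀, x, rfl⟩
  · rintro ⟨hc, -⟩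
    rw [picked_nil] at hc
    exact not_fills_empty hWF.1 hc
  · obtain ⟨hv₀, hnend, -, -⟩ := valid_concat_facts hv
    rw [ended] at hnend
    push_neg at hnend
    rintro ⟨hcL, hcR⟩
    rcases player_cases (mover s h₀.length) with hm | hm
    · rw [picked_concat s .R h₀ x, if_neg (by rw [hm]; simp)] at hcR
      exact hnend.2 hcR
    · rw [picked_concat s .L h₀ x, if_neg (by rw [hm]; simp)] at hcL
      exact hnend.1 hcL

end Hist
section Strat

/-- Left's value-optimal strategy. -/
def stratL (G : Game) (s : Player) : Strategy := fun h =>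
  if hne : (G.V \ (picked s .L h ∪ picked s .R h)).Nonempty then
    ((G.V \ (picked s .L h ∪ picked s .R h)).filter fun u =>
      val G (insert u (picked s .L h)) (picked s .R h) .R =
        (G.V \ (picked s .L h ∪ picked s .R h)).sup' hne fun u =>
          val G (insert u (picked s .L h)) (picked s .R h) .R).min'
      (by
        obtain ⟨u, hu, he⟩ := Finset.exists_mem_eq_sup' hne
          (fun u => val G (insert u (picked s .L h)) (picked s .R h) .R)
        exact ⟨u, Finset.mem_filter.mpr ⟨hu, he.symm⟩⟩)
  else 0

lemma stratL_spec {G : Game} {s : Player} {h : List ℕ}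
    (hne : (G.V \ (picked s .L h ∪ picked s .R h)).Nonempty) :
    stratL G s h ∈ G.V \ (picked s .L h ∪ picked s .R h) ∧
      val G (insert (stratL G s h) (picked s .L h)) (picked s .R h) .R =
        (G.V \ (picked s .L h ∪ picked s .R h)).sup' hne fun u =>
          val G (insert u (picked s .L h)) (picked s .R h) .R := by
  have : stratL G s h ∈ (G.V \ (picked s .L h ∪ picked s .R h)).filter fun u =>
      val G (insert u (picked s .L h)) (picked s .R h) .R =
        (G.V \ (picked s .L h ∪ picked s .R h)).sup' hne fun u =>
          val G (insert u (picked s .L h)) (picked s .R h) .R := by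
    rw [stratL, dif_pos hne]
    exact Finset.min'_mem _ _
  exact Finset.mem_filter.mp this

lemma free_eq_of_hist {G : Game} (s : Player) (h : List ℕ) :
    G.V \ (picked s .L h ∪ picked s .R h) = G.V \ h.toFinset := by
  rw [picked_union]

lemma free_nonempty_of_lt_card {G : Game} {s : Player} {h : List ℕ}
    (hv : ValidHist G s h) (hlen : h.length < G.V.card) :
    (G.V \ (picked s .L h ∪ picked s .R h)).Nonempty := by
  rw [free_eq_of_hist]
  have hsub := toFinset_subset_V hv
  have hcard := List.toFinset_card_of_nodup hv.1
  rw [← Finset.card_pos, Finset.card_sdiff_of_subset hsub]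
  omega

lemma stratL_legal (G : Game) (s : Player) : Legal G s .L (stratL G s) := by
  intro h hv _ _ hlen _
  have hne := free_nonempty_of_lt_card hv hlen
  have hmem := (stratL_spec hne).1
  rw [free_eq_of_hist] at hmem
  rw [Finset.mem_sdiff] at hmem
  exact ⟨hmem.1, fun hc => hmem.2 (List.mem_toFinset.mpr hc)⟩

lemma stratL_inv (G : Game) (s : Player) : ∀ h, ValidHist G s h →
    Follows s .L (stratL G s) h →
    val G ∅ ∅ s ≤ val G (picked s .L h) (picked s .R h) (mover s h.length) := by
  intro h
  induction h using List.reverseRecOn with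
  | nil =>
    intro _ _
    rw [picked_nil, picked_nil, List.length_nil, mover_zero]
  | append_singleton h₀ x IH =>
    intro hv hf
    obtain ⟨hv₀, hnend, hxV, hxh⟩ := valid_concat_facts hv
    have hf₀ : Follows s .L (stratL G s) h₀ := by
      have := follows_take hf h₀.length
      rwa [List.take_left] at this
    have hIH := IH hv₀ hf₀
    rw [ended] at hnend
    push_neg at hnend
    obtain ⟨hfa, hfb⟩ := hnend
    have hxfree : x ∈ G.V \ (picked s .L h₀ ∪ picked s .R h₀) := by
      rw [free_eq_of_hist, Finset.mem_sdiff]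
      exact ⟨hxV, fun hc => hxh (List.mem_toFinset.mp hc)⟩
    have hne : (G.V \ (picked s .L h₀ ∪ picked s .R h₀)).Nonempty := ⟨x, hxfree⟩
    have hlen : (h₀ ++ [x]).length = h₀.length + 1 := by simp
    rw [hlen, mover_succ, picked_concat, picked_concat]
    rcases player_cases (mover s h₀.length) with hm | hm
    · -- Left just moved, following the strategy
      rw [hm] at hIH ⊢
      rw [if_pos rfl, if_neg (by simp)]
      have hx_eq : x = stratL G s h₀ := by
        have := hf h₀.length (by simp) hm
        rwa [getD_concat_length, List.take_left] at this
      rw [hx_eq, show Player.L.other = Player.R from rfl]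
      rw [(stratL_spec hne).2, ← val_L_eq hfa hfb hne]
      exact hIH
    · -- Right just moved
      rw [hm] at hIH ⊢
      rw [if_neg (by simp), if_pos rfl, show Player.R.other = Player.L from rfl]
      refine le_trans hIH ?_
      rw [val_R_eq hfa hfb hne]
      exact Finset.inf'_le _ hxfree

lemma stratL_guarantee {G : Game} (s : Player) (hWF : WellFormed G) :
    ∀ h, ValidHist G s h → Follows s .L (stratL G s) h → Complete G s h →
      (1 ≤ val G ∅ ∅ s → ¬ fills G.ER (picked s .R h)) ∧
      (val G ∅ ∅ s = 2 → fills G.EL (picked s .L h)) := by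
  intro h hv hf hc
  have hinv := stratL_inv G s h hv hf
  constructor
  · intro h1 hfill
    have hnotL : ¬ fills G.EL (picked s .L h) := fun hcL =>
      not_both_fills hWF hv ⟨hcL, hfill⟩
    rw [val_fillsR hnotL hfill] at hinv
    omega
  · intro h2
    by_contra hnEL
    by_cases hfB : fills G.ER (picked s .R h)
    · rw [val_fillsR hnEL hfB] at hinv; omega
    · rcases hc with hend | hfull
      · exact absurd hend (by rw [ended]; push_neg; exact ⟨hnEL, hfB⟩)
      · have hFe : ¬ (G.V \ (picked s .L h ∪ picked s .R h)).Nonempty := by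
          rw [free_eq_of_hist]
          have hsub := toFinset_subset_V hv
          have hcard := List.toFinset_card_of_nodup hv.1
          have : h.toFinset = G.V :=
            Finset.eq_of_subset_of_card_le hsub (by omega)
          rw [this, Finset.sdiff_self]
          simp
        rw [val_full hnEL hfB hFe] at hinv
        omega

end Strat
section SwapHist

lemma picked_other (s p : Player) (h : List ℕ) :
    picked s.other p.other h = picked s p h := by
  unfold picked
  congr 1
  apply Finset.filter_congr
  intro i _
  rw [mover_other]
  simp [Player.other_inj]

lemma picked_other_L (s : Player) (h : List ℕ) :
    picked s.other .L h = picked s .R h := picked_other s .R h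

lemma picked_other_R (s : Player) (h : List ℕ) :
    picked s.other .R h = picked s .L h := picked_other s .L h

lemma ended_swap (G : Game) (s : Player) (h : List ℕ) :
    ended (swapG G) s.other h ↔ ended G s h := by
  show fills G.ER (picked s.other .L h) ∨ fills G.EL (picked s.other .R h) ↔ _
  rw [picked_other_L, picked_other_R, ended, or_comm]

lemma valid_swap {G : Game} {s : Player} {h : List ℕ} :
    ValidHist (swapG G) s.other h ↔ ValidHist G s h := by
  constructor <;> rintro ⟨h1, h2, h3⟩ <;>
    exact ⟨h1, h2, fun k hk => fun hc => h3 k hk (by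
      first
      | exact (ended_swap G s (h.take k)).mpr hc
      | exact (ended_swap G s (h.take k)).mp hc)⟩

lemma follows_swap {s p : Player} {σ : Strategy} {h : List ℕ} :
    Follows s.other p.other σ h ↔ Follows s p σ h := by
  constructor <;> intro hf k hk hm
  · exact hf k hk (by rw [mover_other, hm])
  · exact hf k hk (by rw [mover_other, Player.other_inj] at hm; exact hm)

lemma complete_swap {G : Game} {s : Player} {h : List ℕ} :
    Complete (swapG G) s.other h ↔ Complete G s h := by
  unfold Complete
  rw [ended_swap]
  exact Iff.rfl

/-- Right's value-optimal strategy. -/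
def stratR (G : Game) (s : Player) : Strategy := stratL (swapG G) s.other

lemma stratR_legal (G : Game) (s : Player) : Legal G s .R (stratR G s) := by
  intro h hv hf hnend hlen hm
  exact stratL_legal (swapG G) s.other h (valid_swap.mpr hv)
    (follows_swap.mpr hf)
    (fun hc => hnend ((ended_swap G s h).mp hc)) hlen
    (by rw [mover_other, hm]; rfl)

lemma val_swap_empty {G : Game} (hWF : WellFormed G) (t : Player) :
    val (swapG G) ∅ ∅ t = 2 - val G ∅ ∅ t.other :=
  val_swap G _ ∅ ∅ t le_rfl (Or.inl (not_fills_empty hWF.2))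

lemma stratR_guarantee {G : Game} (s : Player) (hWF : WellFormed G) :
    ∀ h, ValidHist G s h → Follows s .R (stratR G s) h → Complete G s h →
      (val G ∅ ∅ s ≤ 1 → ¬ fills G.EL (picked s .L h)) ∧
      (val G ∅ ∅ s = 0 → fills G.ER (picked s .R h)) := by
  intro h hv hf hc
  have hG := stratL_guarantee (G := swapG G) s.other (wellFormed_swap hWF) h
    (valid_swap.mpr hv) (follows_swap.mpr hf) (complete_swap.mpr hc)
  have hval : val (swapG G) ∅ ∅ s.other = 2 - val G ∅ ∅ s := by
    rw [val_swap_empty hWF, Player.other_other]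
  have hle := val_le_two' G ∅ ∅ s
  constructor
  · intro h1
    have := hG.1 (by omega)
    rwa [show (swapG G).ER = G.EL from rfl, picked_other_R] at this
  · intro h0
    have := hG.2 (by omega)
    rwa [show (swapG G).EL = G.ER from rfl, picked_other_L] at this

end SwapHist
section PlayOut

/-- Play both strategies against each other for `k` steps. -/
def playSeq (G : Game) (s : Player) (σL σR : Strategy) : ℕ → List ℕ
  | 0 => []
  | k + 1 =>
    let h := playSeq G s σL σR k
    if ended G s h ∨ G.V.card ≤ h.length then h
    else h ++ [if mover s h.length = .L then σL h else σR h]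

lemma playSeq_spec {G : Game} {s : Player} {σL σR : Strategy}
    (hL : Legal G s .L σL) (hR : Legal G s .R σR) :
    ∀ k, ValidHist G s (playSeq G s σL σR k) ∧ Follows s .L σL (playSeq G s σL σR k) ∧
      Follows s .R σR (playSeq G s σL σR k) ∧
      (Complete G s (playSeq G s σL σR k) ∨ (playSeq G s σL σR k).length = k) := by
  intro k
  induction k with
  | zero =>
    rw [show playSeq G s σL σR 0 = [] from rfl]
    refine ⟨⟨List.nodup_nil, by simp, fun j hj => by simp at hj⟩, ?_, ?_, Or.inr rfl⟩ <;>
      · intro j hj; simp at hj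
  | succ k IH =>
    obtain ⟨hv, hfL, hfR, hor⟩ := IH
    set h := playSeq G s σL σR k with hdef
    by_cases hstop : ended G s h ∨ G.V.card ≤ h.length
    · have heq : playSeq G s σL σR (k + 1) = h := by
        rw [playSeq, ← hdef, if_pos hstop]
      rw [heq]
      refine ⟨hv, hfL, hfR, Or.inl ?_⟩
      rcases hstop with hend | hfull
      · exact Or.inl hend
      · exact Or.inr (le_antisymm (length_le_card hv) hfull)
    · push_neg at hstop
      obtain ⟨hnend, hlt⟩ := hstop
      set x := if mover s h.length = .L then σL h else σR h with hxdef
      have heq : playSeq G s σL σR (k + 1) = h ++ [x] := by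
        rw [playSeq, ← hdef, if_neg (by push_neg; exact ⟨hnend, hlt⟩)]
      have hx : x ∈ G.V ∧ x ∉ h := by
        rcases player_cases (mover s h.length) with hm | hm
        · rw [hxdef, if_pos hm]
          exact hL h hv hfL hnend hlt hm
        · rw [hxdef, if_neg (by rw [hm]; simp)]
          exact hR h hv hfR hnend hlt hm
      have hnodup : (h ++ [x]).Nodup := by
        rw [List.nodup_append]
        exact ⟨hv.1, List.nodup_singleton x, by
          intro a ha b hb
          simp only [List.mem_singleton] at hb
          intro hab; rw [hab, hb] at ha
          exact hx.2 ha⟩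
      have hmem : ∀ y ∈ h ++ [x], y ∈ G.V := by
        intro y hy
        rcases List.mem_append.mp hy with hy | hy
        · exact hv.2.1 y hy
        · simp only [List.mem_singleton] at hy
          exact hy ▸ hx.1
      have hvalid : ValidHist G s (h ++ [x]) := by
        refine ⟨hnodup, hmem, ?_⟩
        intro j hj
        simp only [List.length_append, List.length_singleton] at hj
        rcases lt_or_eq_of_le (Nat.lt_succ_iff.mp hj) with hjlt | hjeq
        · rw [List.take_append_of_le_length (le_of_lt hjlt)]
          exact hv.2.2 j hjlt
        · rw [hjeq, List.take_left]
          exact hnend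
      have hfol : ∀ (p : Player) (σ : Strategy), Follows s p σ h →
          (mover s h.length = p → x = σ h) → Follows s p σ (h ++ [x]) := by
        intro p σ hfol hlast j hj hm
        simp only [List.length_append, List.length_singleton] at hj
        rcases lt_or_eq_of_le (Nat.lt_succ_iff.mp hj) with hjlt | hjeq
        · rw [getD_concat_lt h x hjlt, List.take_append_of_le_length (le_of_lt hjlt)]
          exact hfol j hjlt hm
        · subst hjeq
          rw [getD_concat_length, List.take_left]
          exact hlast hm
      have hklen : h.length = k := by
        rcases hor with hc | hl
        · rcases hc with he | hfull
          · exact absurd he hnend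
          · omega
        · exact hl
      rw [heq]
      refine ⟨hvalid, ?_, ?_, Or.inr (by simp [hklen])⟩
      · refine hfol .L σL hfL fun hm => ?_
        rw [hxdef, if_pos hm]
      · refine hfol .R σR hfR fun hm => ?_
        rw [hxdef, if_neg (by rw [hm]; simp)]

lemma exists_complete_play {G : Game} {s : Player} {σL σR : Strategy}
    (hL : Legal G s .L σL) (hR : Legal G s .R σR) :
    ∃ h, ValidHist G s h ∧ Follows s .L σL h ∧ Follows s .R σR h ∧ Complete G s h := by
  obtain ⟨hv, hfL, hfR, hor⟩ := playSeq_spec hL hR G.V.card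
  refine ⟨playSeq G s σL σR G.V.card, hv, hfL, hfR, ?_⟩
  rcases hor with hc | hlen
  · exact hc
  · exact Or.inr hlen

end PlayOut
section Assembly

lemma resultIs_of_val {G : Game} (hWF : WellFormed G) (s : Player) (r : Result)
    (hval : val G ∅ ∅ s = r.val) : resultIs G s r := by
  cases r with
  | Lwin =>
    refine ⟨stratL G s, stratL_legal G s, fun h hv hf hc => ?_⟩
    exact (stratL_guarantee s hWF h hv hf hc).2 hval
  | Rwin =>
    refine ⟨stratR G s, stratR_legal G s, fun h hv hf hc => ?_⟩
    exact (stratR_guarantee s hWF h hv hf hc).2 hval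
  | draw =>
    constructor
    · refine ⟨stratL G s, stratL_legal G s, fun h hv hf hc => ?_⟩
      exact (stratL_guarantee s hWF h hv hf hc).1 (le_of_eq hval.symm)
    · refine ⟨stratR G s, stratR_legal G s, fun h hv hf hc => ?_⟩
      exact (stratR_guarantee s hWF h hv hf hc).1 (le_of_eq hval)

lemma val_of_resultIs {G : Game} (hWF : WellFormed G) (s : Player) (r : Result)
    (hres : resultIs G s r) : val G ∅ ∅ s = r.val := by
  have hle := val_le_two' G ∅ ∅ s
  cases r with
  | Lwin =>
    obtain ⟨σ, hleg, hwin⟩ := hres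
    by_contra hne
    have h1 : val G ∅ ∅ s ≤ 1 := by
      have : val G ∅ ∅ s ≠ 2 := hne
      omega
    obtain ⟨h, hv, hfL, hfR, hc⟩ := exists_complete_play hleg (stratR_legal G s)
    exact (stratR_guarantee s hWF h hv hfR hc).1 h1 (hwin h hv hfL hc)
  | Rwin =>
    obtain ⟨σ, hleg, hwin⟩ := hres
    by_contra hne
    have h1 : 1 ≤ val G ∅ ∅ s := by
      have : val G ∅ ∅ s ≠ 0 := hne
      omega
    obtain ⟨h, hv, hfL, hfR, hc⟩ := exists_complete_play (stratL_legal G s) hleg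
    exact (stratL_guarantee s hWF h hv hfL hc).1 h1 (hwin h hv hfR hc)
  | draw =>
    obtain ⟨⟨σ1, hleg1, hnl1⟩, ⟨σ2, hleg2, hnl2⟩⟩ := hres
    have hne0 : val G ∅ ∅ s ≠ 0 := by
      intro h0
      obtain ⟨h, hv, hfL, hfR, hc⟩ := exists_complete_play hleg1 (stratR_legal G s)
      exact hnl1 h hv hfL hc ((stratR_guarantee s hWF h hv hfR hc).2 h0)
    have hne2 : val G ∅ ∅ s ≠ 2 := by
      intro h2
      obtain ⟨h, hv, hfL, hfR, hc⟩ := exists_complete_play (stratL_legal G s) hleg2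
      exact hnl2 h hv hfR hc ((stratL_guarantee s hWF h hv hfL hc).2 h2)
    show val G ∅ ∅ s = 1
    omega

lemma resultIs_iff_val {G : Game} (hWF : WellFormed G) (s : Player) (r : Result) :
    resultIs G s r ↔ val G ∅ ∅ s = r.val :=
  ⟨val_of_resultIs hWF s r, resultIs_of_val hWF s r⟩

lemma hasOutcome_iff_val {G : Game} (hWF : WellFormed G) (o : Outcome) :
    hasOutcome G o ↔ (val G ∅ ∅ .L = o.1.val ∧ val G ∅ ∅ .R = o.2.val) := by
  unfold hasOutcome
  rw [resultIs_iff_val hWF, resultIs_iff_val hWF]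

end Assembly
/-- If `o(G) = D`, then `o(G ∪ G') = o(G')`. -/
theorem union_with_draw (G G' : Game) (hG : WellFormed G) (hG' : WellFormed G')
    (hdisj : Disjoint G.V G'.V) (hD : hasOutcome G oD) :
    ∀ o : Outcome, hasOutcome G' o ↔ hasOutcome (gunion G G') o := by
  intro o
  have hvals := (hasOutcome_iff_val hG oD).mp hD
  have hDL : val G ∅ ∅ .L = 1 := hvals.1
  have hDR : val G ∅ ∅ .R = 1 := hvals.2
  have hUL := val_union_eq hG hG' hdisj hDL hDR .L
  have hUR := val_union_eq hG hG' hdisj hDL hDR .R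
  rw [hasOutcome_iff_val hG', hasOutcome_iff_val (wellFormed_gunion hG hG'), hUL, hUR]
end APG
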